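/- Every value function on finite sequences is present focused: in the letter game on an automaton over finite words, every cautious strategy of Eve (one that never makes a move after which the best achievable value of some continuation strictly drops) is a winning strategy, i.e., for every finite word w played by Adam, the run ρ constructed by the cautious strategy satisfies Val(ρ) = A(w). -/

import Mathlib

/-- A nondeterministic quantitative automaton over alphabet `A`:
states, an initial state, and a total transition relation with rational weights. -/
structure NQA (A : Type) where
  Q : Type
  init : Q
  δ : Q → A → Set (ℚ × Q)
  total : ∀ q a, (δ q a).Nonempty

/-- `IsRunFrom M q u xs`: `xs` is the weight sequence of a run of `M` on the
finite word `u` starting in state `q`. -/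
inductive IsRunFrom {A : Type} (M : NQA A) : M.Q → List A → List ℚ → Prop
  | nil (q : M.Q) : IsRunFrom M q [] []
  | cons {q : M.Q} {a : A} {u : List A} {x : ℚ} {q' : M.Q} {xs : List ℚ} :
      (x, q') ∈ M.δ q a → IsRunFrom M q' u xs → IsRunFrom M q (a :: u) (x :: xs)

/-- The value of the automaton on a finite word: supremum of values of runs. -/
noncomputable def AVal {A : Type} (M : NQA A) (Val : List ℚ → ℝ) (u : List A) : ℝ :=
  sSup {r : ℝ | ∃ xs, IsRunFrom M M.init u xs ∧ Val xs = r}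

/-- The state reached by Eve's letter-game strategy `s` (which picks a
transition from the word read so far and the current letter) after reading `u`,
starting from state `q` with word-history `pre`. -/
def stratStateAux {A : Type} (M : NQA A) (s : List A → A → ℚ × M.Q)
    (pre : List A) (q : M.Q) : List A → M.Q
  | [] => q
  | a :: u => stratStateAux M s (pre ++ [a]) (s pre a).2 u

/-- The state reached by strategy `s` after the word `u`. -/
def stratState {A : Type} (M : NQA A) (s : List A → A → ℚ × M.Q) (u : List A) : M.Q :=
  stratStateAux M s [] M.init u

/-- The weights of the run built by strategy `s` on the word `u`. -/
def stratWeightsAux {A : Type} (M : NQA A) (s : List A → A → ℚ × M.Q)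
    (pre : List A) : List A → List ℚ
  | [] => []
  | a :: u => (s pre a).1 :: stratWeightsAux M s (pre ++ [a]) u

def stratWeights {A : Type} (M : NQA A) (s : List A → A → ℚ × M.Q) (u : List A) : List ℚ :=
  stratWeightsAux M s [] u

/-- The strategy only uses transitions of the automaton. -/
def StratLegal {A : Type} (M : NQA A) (s : List A → A → ℚ × M.Q) : Prop :=
  ∀ u a, s u a ∈ M.δ (stratState M s u) a

/-- A strategy of Eve in the letter game is cautious if it never makes a move
after which the best achievable value of some continuation strictly drops. -/
def Cautious {A : Type} (M : NQA A) (Val : List ℚ → ℝ) (s : List A → A → ℚ × M.Q) : Prop :=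
  StratLegal M s ∧
  ∀ u a v,
    sSup {r : ℝ | ∃ xs, IsRunFrom M (stratState M s u) (a :: v) xs ∧
        r = Val (stratWeights M s u ++ xs)} ≤
    sSup {r : ℝ | ∃ ys, IsRunFrom M (s u a).2 v ys ∧
        r = Val (stratWeights M s u ++ (s u a).1 :: ys)}

/-- `M` is history deterministic: Eve wins her letter game, i.e. she has a
strategy building, letter by letter, runs achieving the automaton's value. -/
def HistoryDet {A : Type} (M : NQA A) (Val : List ℚ → ℝ) : Prop :=
  ∃ s : List A → A → ℚ × M.Q, StratLegal M s ∧
    ∀ u : List A, AVal M Val u ≤ Val (stratWeights M s u)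

/-- Weights of the run of the pruned (deterministic) automaton given by the
choice function `σ` from state `q` on a word. -/
def detWeights {A : Type} (M : NQA A) (σ : M.Q → A → ℚ × M.Q) : M.Q → List A → List ℚ
  | _, [] => []
  | q, a :: u => (σ q a).1 :: detWeights M σ (σ q a).2 u

/-- `M` is determinizable by pruning: some choice of a single transition per
state-letter pair yields an equivalent deterministic automaton. -/
def DetByPruning {A : Type} (M : NQA A) (Val : List ℚ → ℝ) : Prop :=
  ∃ σ : M.Q → A → ℚ × M.Q, (∀ q a, σ q a ∈ M.δ q a) ∧
    ∀ u : List A, Val (detWeights M σ M.init u) = AVal M Val u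

lemma stratStateAux_append {A : Type} (M : NQA A) (s : List A → A → ℚ × M.Q) :
    ∀ (u : List A) (pre : List A) (q : M.Q) (v : List A),
      stratStateAux M s pre q (u ++ v) =
        stratStateAux M s (pre ++ u) (stratStateAux M s pre q u) v := by
  intro u
  induction u with
  | nil => intro pre q v; simp [stratStateAux]
  | cons a u ih =>
      intro pre q v
      simp only [List.cons_append, stratStateAux]
      rw [ih]
      simp

lemma stratWeightsAux_append {A : Type} (M : NQA A) (s : List A → A → ℚ × M.Q) :
    ∀ (u : List A) (pre : List A) (v : List A),
      stratWeightsAux M s pre (u ++ v) =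
        stratWeightsAux M s pre u ++ stratWeightsAux M s (pre ++ u) v := by
  intro u
  induction u with
  | nil => intro pre v; simp [stratWeightsAux]
  | cons a u ih =>
      intro pre v
      simp only [List.cons_append, stratWeightsAux]
      rw [ih]
      simp

lemma stratState_snoc {A : Type} (M : NQA A) (s : List A → A → ℚ × M.Q)
    (u : List A) (a : A) : stratState M s (u ++ [a]) = (s u a).2 := by
  unfold stratState
  rw [stratStateAux_append]
  simp [stratStateAux]

lemma stratWeights_snoc {A : Type} (M : NQA A) (s : List A → A → ℚ × M.Q)
    (u : List A) (a : A) :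
    stratWeights M s (u ++ [a]) = stratWeights M s u ++ [(s u a).1] := by
  unfold stratWeights
  rw [stratWeightsAux_append]
  simp [stratWeightsAux]

lemma run_exists {A : Type} (M : NQA A) :
    ∀ (v : List A) (q : M.Q), ∃ xs, IsRunFrom M q v xs := by
  intro v
  induction v with
  | nil => intro q; exact ⟨[], IsRunFrom.nil q⟩
  | cons a v ih =>
      intro q
      obtain ⟨⟨x, q'⟩, hx⟩ := M.total q a
      obtain ⟨xs, hxs⟩ := ih q'
      exact ⟨x :: xs, IsRunFrom.cons hx hxs⟩

lemma runs_finite {A : Type} (M : NQA A) (hfin : ∀ q a, (M.δ q a).Finite) :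
    ∀ (v : List A) (q : M.Q), {xs | IsRunFrom M q v xs}.Finite := by
  intro v
  induction v with
  | nil =>
      intro q
      apply Set.Finite.subset (Set.finite_singleton ([] : List ℚ))
      intro xs hxs
      cases hxs
      rfl
  | cons a v ih =>
      intro q
      apply Set.Finite.subset
        (Set.Finite.biUnion (hfin q a)
          (fun p _ => (ih p.2).image (fun xs => p.1 :: xs)))
      intro xs hxs
      cases hxs with
      | cons h hrun =>
          exact Set.mem_biUnion h ⟨_, hrun, rfl⟩

lemma strat_run {A : Type} (M : NQA A) (s : List A → A → ℚ × M.Q)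
    (hl : StratLegal M s) :
    ∀ (v u : List A), IsRunFrom M (stratState M s u) v (stratWeightsAux M s u v) := by
  intro v
  induction v with
  | nil => intro u; exact IsRunFrom.nil _
  | cons a v ih =>
      intro u
      have h1 := hl u a
      have h2 := ih (u ++ [a])
      rw [stratState_snoc] at h2
      exact IsRunFrom.cons h1 h2

lemma key_lemma {A : Type} (M : NQA A) (Val : List ℚ → ℝ)
    (s : List A → A → ℚ × M.Q) (hc : Cautious M Val s) :
    ∀ (v u : List A),
      sSup {r : ℝ | ∃ xs, IsRunFrom M (stratState M s u) v xs ∧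
          r = Val (stratWeights M s u ++ xs)} ≤ Val (stratWeights M s (u ++ v)) := by
  intro v
  induction v with
  | nil =>
      intro u
      have hset : {r : ℝ | ∃ xs, IsRunFrom M (stratState M s u) [] xs ∧
          r = Val (stratWeights M s u ++ xs)} = {Val (stratWeights M s u)} := by
        ext r
        constructor
        · rintro ⟨xs, hxs, rfl⟩
          cases hxs
          simp
        · rintro rfl
          exact ⟨[], IsRunFrom.nil _, by simp⟩
      rw [hset, csSup_singleton]
      simp
  | cons a v ih =>
      intro u
      refine le_trans (hc.2 u a v) ?_
      have hset : {r : ℝ | ∃ ys, IsRunFrom M (s u a).2 v ys ∧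
          r = Val (stratWeights M s u ++ (s u a).1 :: ys)} =
          {r : ℝ | ∃ ys, IsRunFrom M (stratState M s (u ++ [a])) v ys ∧
          r = Val (stratWeights M s (u ++ [a]) ++ ys)} := by
        simp only [stratState_snoc, stratWeights_snoc, List.append_assoc,
          List.singleton_append]
      rw [hset]
      refine le_trans (ih (u ++ [a])) ?_
      simp

/-- Every value function on finite sequences is present focused:
in the letter game on an automaton over finite words (with finitely many
transitions per state-letter pair, so maxima over runs are attained), every
cautious strategy of Eve is winning: for every finite word w played by Adam, the
run built by the strategy satisfies Val(ρ) = A(w). -/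
theorem finite_words_present_focused {A : Type} (M : NQA A) (Val : List ℚ → ℝ)
    (hfin : ∀ q a, (M.δ q a).Finite)
    (s : List A → A → ℚ × M.Q) (hc : Cautious M Val s) :
    ∀ u : List A, Val (stratWeights M s u) = AVal M Val u := by
  intro u
  have hrun : IsRunFrom M M.init u (stratWeights M s u) := by
    have h := strat_run M s hc.1 u []
    simpa [stratState, stratStateAux, stratWeights] using h
  have hbdd : BddAbove {r : ℝ | ∃ xs, IsRunFrom M M.init u xs ∧ Val xs = r} := by
    have : {r : ℝ | ∃ xs, IsRunFrom M M.init u xs ∧ Val xs = r} =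
        Val '' {xs | IsRunFrom M M.init u xs} := by
      ext r; simp [Set.mem_image, eq_comm]
    rw [this]
    exact ((runs_finite M hfin u M.init).image Val).bddAbove
  have hle : Val (stratWeights M s u) ≤ AVal M Val u :=
    le_csSup hbdd ⟨stratWeights M s u, hrun, rfl⟩
  have hge : AVal M Val u ≤ Val (stratWeights M s u) := by
    have h := key_lemma M Val s hc u []
    have hset : {r : ℝ | ∃ xs, IsRunFrom M (stratState M s []) u xs ∧
        r = Val (stratWeights M s [] ++ xs)} =
        {r : ℝ | ∃ xs, IsRunFrom M M.init u xs ∧ Val xs = r} := by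
      ext r
      simp [stratState, stratStateAux, stratWeights, stratWeightsAux, eq_comm]
    rw [hset] at h
    simpa [AVal] using h
  linarith
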